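/- Let G_σ be a signed graph on vertex set V. The function ρ(X) = |V| − c₀(X) for X ⊆ E(G), where c₀(X) is the number of balanced connected components of the spanning subgraph (V, X), is the rank function of a matroid on E(G). -/

import Mathlib

open Classical Set

structure SignedGraph (V E : Type*) where
  ends : E → V × V
  sign : E → Bool

namespace SignedGraph

variable {V E : Type*} (G : SignedGraph V E)

def touches (e : E) (v : V) : Prop := (G.ends e).1 = v ∨ (G.ends e).2 = v

def verts (X : Set E) : Set V := {v | ∃ e ∈ X, G.touches e v}

noncomputable def deg (X : Set E) (v : V) : ℕ :=
  ∑ᶠ e ∈ X, ((if (G.ends e).1 = v then 1 else 0) + (if (G.ends e).2 = v then 1 else 0))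

def adjIn (X : Set E) (u v : V) : Prop :=
  ∃ e ∈ X, G.ends e = (u, v) ∨ G.ends e = (v, u)

def ConnSet (X : Set E) : Prop :=
  ∀ u ∈ G.verts X, ∀ v ∈ G.verts X, Relation.EqvGen (G.adjIn X) u v

def IsCycle (C : Set E) : Prop :=
  C.Nonempty ∧ G.ConnSet C ∧ ∀ v ∈ G.verts C, G.deg C v = 2

noncomputable def negCount (C : Set E) : ℕ := {e ∈ C | G.sign e = false}.ncard

def IsBalancedCycle (C : Set E) : Prop := G.IsCycle C ∧ Even (G.negCount C)

def IsUnbalancedCycle (C : Set E) : Prop := G.IsCycle C ∧ ¬ Even (G.negCount C)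

def IsPath (P : Set E) : Prop :=
  P.Nonempty ∧ G.ConnSet P ∧ (∀ e ∈ P, (G.ends e).1 ≠ (G.ends e).2) ∧
    (∀ v ∈ G.verts P, G.deg P v ≤ 2) ∧
    {v ∈ G.verts P | G.deg P v = 1}.ncard = 2

def IsBowtie (B : Set E) : Prop :=
  (∃ C₁ C₂, G.IsUnbalancedCycle C₁ ∧ G.IsUnbalancedCycle C₂ ∧ B = C₁ ∪ C₂ ∧
      ∃ v, G.verts C₁ ∩ G.verts C₂ = {v}) ∨
  (∃ C₁ C₂ P, G.IsUnbalancedCycle C₁ ∧ G.IsUnbalancedCycle C₂ ∧ G.IsPath P ∧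
      Disjoint (G.verts C₁) (G.verts C₂) ∧ B = C₁ ∪ C₂ ∪ P ∧
      (∃ v₁, G.verts P ∩ G.verts C₁ = {v₁} ∧ G.deg P v₁ = 1) ∧
      (∃ v₂, G.verts P ∩ G.verts C₂ = {v₂} ∧ G.deg P v₂ = 1) ∧
      Disjoint P C₁ ∧ Disjoint P C₂)

def comp (X : Set E) (v : V) : Set V := {w | Relation.EqvGen (G.adjIn X) v w}

noncomputable def numComponents (X : Set E) : ℕ := {K | ∃ v, K = G.comp X v}.ncard

def BalancedComponent (X : Set E) (K : Set V) : Prop :=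
  (∃ v, K = G.comp X v) ∧ ∀ C ⊆ X, G.verts C ⊆ K → G.IsCycle C → Even (G.negCount C)

noncomputable def numBalancedComponents (X : Set E) : ℕ := {K | G.BalancedComponent X K}.ncard

def Balanced : Prop := ∀ C, G.IsCycle C → Even (G.negCount C)

def Connected : Prop := ∀ u v : V, Relation.EqvGen (G.adjIn Set.univ) u v

noncomputable def incCol (K : Type*) [Field K] (e : E) : V → K := fun v =>
  (if (G.ends e).1 = v then 1 else 0) +
    (if (G.ends e).2 = v then (if G.sign e then -1 else 1) else 0)

noncomputable def incMatrix (K : Type*) [Field K] : Matrix V E K := fun v e => G.incCol K e v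

noncomputable def code (K : Type*) [Field K] : Submodule K (E → K) :=
  Submodule.span K (Set.range fun v => fun e => G.incCol K e v)

end SignedGraph

noncomputable def codeSupport {ι F : Type*} [Field F] (D : Submodule F (ι → F)) : Set ι :=
  {i | ∃ v ∈ D, v i ≠ 0}

noncomputable def GHW {ι F : Type*} [Field F] (C : Submodule F (ι → F)) (r : ℕ) : ℕ :=
  sInf {n | ∃ D : Submodule F (ι → F), D ≤ C ∧ Module.finrank F D = r ∧ (codeSupport D).ncard = n}

noncomputable def dotL {ι F : Type*} [Fintype ι] [Field F] (v : ι → F) : (ι → F) →ₗ[F] F where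
  toFun w := ∑ i, v i * w i
  map_add' a b := by simp [mul_add, Finset.sum_add_distrib]
  map_smul' c a := by simp [Finset.mul_sum, mul_left_comm, smul_eq_mul]

noncomputable def dualCode {ι F : Type*} [Fintype ι] [Field F]
    (C : Submodule F (ι → F)) : Submodule F (ι → F) :=
  ⨅ v ∈ C, LinearMap.ker (dotL v)

def NonRedundant {α : Type*} {r : ℕ} (C : Fin r → Set α) : Prop :=
  ∀ j, (⋃ i, ⋃ (_ : i ≠ j), C i) ⊂ ⋃ i, C i

namespace Aux
open SignedGraph Relation

variable {V E : Type*} (G : SignedGraph V E)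

def rel (X : Set E) : V → V → Prop := Relation.EqvGen (G.adjIn X)

variable {G}

lemma rel_refl {X : Set E} (a : V) : rel G X a a := (Relation.EqvGen.is_equivalence _).refl a
lemma rel_symm {X : Set E} {a b : V} (h : rel G X a b) : rel G X b a :=
  (Relation.EqvGen.is_equivalence _).symm h
lemma rel_trans {X : Set E} {a b c : V} (h : rel G X a b) (h' : rel G X b c) : rel G X a c :=
  (Relation.EqvGen.is_equivalence _).trans h h'

lemma mem_comp {X : Set E} {v w : V} : w ∈ G.comp X v ↔ rel G X v w := Iff.rfl

lemma comp_self {X : Set E} (v : V) : v ∈ G.comp X v := rel_refl v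

lemma comp_eq_of_rel {X : Set E} {v w : V} (h : rel G X v w) : G.comp X v = G.comp X w := by
  ext x; exact ⟨fun hx => rel_trans (rel_symm h) hx, fun hx => rel_trans h hx⟩

lemma rel_of_comp_eq {X : Set E} {v w : V} (h : G.comp X v = G.comp X w) : rel G X v w := by
  have : w ∈ G.comp X v := h ▸ comp_self w
  exact this

lemma adjIn_mono {X Y : Set E} (h : X ⊆ Y) {a b : V} (hab : G.adjIn X a b) : G.adjIn Y a b := by
  obtain ⟨e, he, h'⟩ := hab; exact ⟨e, h he, h'⟩

lemma rel_mono {X Y : Set E} (h : X ⊆ Y) {a b : V} (hab : rel G X a b) : rel G Y a b :=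
  Relation.EqvGen.mono (fun _ _ => adjIn_mono h) _ _ hab

lemma comp_mono {X Y : Set E} (h : X ⊆ Y) (v : V) : G.comp X v ⊆ G.comp Y v :=
  fun _ hw => rel_mono h hw

lemma adjIn_union {X : Set E} {e : E} {u v a b : V} (huv : G.ends e = (u, v)) :
    G.adjIn (X ∪ {e}) a b ↔ G.adjIn X a b ∨ (a = u ∧ b = v) ∨ (a = v ∧ b = u) := by
  constructor
  · rintro ⟨f, hf | hf, h'⟩
    · exact Or.inl ⟨f, hf, h'⟩
    · rcases hf with rfl
      rw [huv] at h'
      rcases h' with h' | h' <;> rw [Prod.mk.injEq] at h'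
      · exact Or.inr (Or.inl ⟨h'.1.symm, h'.2.symm⟩)
      · exact Or.inr (Or.inr ⟨h'.2.symm, h'.1.symm⟩)
  · rintro (h | ⟨rfl, rfl⟩ | ⟨rfl, rfl⟩)
    · exact adjIn_mono subset_union_left h
    · exact ⟨e, Or.inr rfl, Or.inl huv⟩
    · exact ⟨e, Or.inr rfl, Or.inr huv⟩

/-- adding one edge to the relation -/
lemma rel_union {X : Set E} {e : E} {u v : V} (huv : G.ends e = (u, v)) {a b : V} :
    rel G (X ∪ {e}) a b ↔
      rel G X a b ∨ (rel G X a u ∧ rel G X v b) ∨ (rel G X a v ∧ rel G X u b) := by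
  constructor
  · intro h
    induction h with
    | rel x y hxy =>
      rcases (adjIn_union huv).mp hxy with h | ⟨rfl, rfl⟩ | ⟨rfl, rfl⟩
      · exact Or.inl (Relation.EqvGen.rel _ _ h)
      · exact Or.inr (Or.inl ⟨rel_refl _, rel_refl _⟩)
      · exact Or.inr (Or.inr ⟨rel_refl _, rel_refl _⟩)
    | refl x => exact Or.inl (rel_refl x)
    | symm x y _ ih =>
      rcases ih with h | ⟨h1, h2⟩ | ⟨h1, h2⟩
      · exact Or.inl (rel_symm h)
      · exact Or.inr (Or.inr ⟨rel_symm h2, rel_symm h1⟩)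
      · exact Or.inr (Or.inl ⟨rel_symm h2, rel_symm h1⟩)
    | trans x y z _ _ ih1 ih2 =>
      rcases ih1 with h | ⟨h1, h2⟩ | ⟨h1, h2⟩ <;>
        rcases ih2 with h' | ⟨h1', h2'⟩ | ⟨h1', h2'⟩
      · exact Or.inl (rel_trans h h')
      · exact Or.inr (Or.inl ⟨rel_trans h h1', h2'⟩)
      · exact Or.inr (Or.inr ⟨rel_trans h h1', h2'⟩)
      · exact Or.inr (Or.inl ⟨h1, rel_trans h2 h'⟩)
      · exact Or.inl (rel_trans h1 (rel_trans (rel_symm (rel_trans h2 h1')) h2'))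
      · exact Or.inl (rel_trans h1 h2')
      · exact Or.inr (Or.inr ⟨h1, rel_trans h2 h'⟩)
      · exact Or.inl (rel_trans h1 h2')
      · exact Or.inl (rel_trans h1 (rel_trans (rel_symm (rel_trans h2 h1')) h2'))
  · rintro (h | ⟨h1, h2⟩ | ⟨h1, h2⟩)
    · exact rel_mono subset_union_left h
    · have he : rel G (X ∪ {e}) u v :=
        Relation.EqvGen.rel _ _ ((adjIn_union huv).mpr (Or.inr (Or.inl ⟨rfl, rfl⟩)))
      exact rel_trans (rel_mono subset_union_left h1)
        (rel_trans he (rel_mono subset_union_left h2))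
    · have he : rel G (X ∪ {e}) u v :=
        Relation.EqvGen.rel _ _ ((adjIn_union huv).mpr (Or.inr (Or.inl ⟨rfl, rfl⟩)))
      exact rel_trans (rel_mono subset_union_left h1)
        (rel_trans (rel_symm he) (rel_mono subset_union_left h2))

lemma rel_union_of_rel {X : Set E} {e : E} {u v : V} (huv : G.ends e = (u, v))
    (h : rel G X u v) {a b : V} : rel G (X ∪ {e}) a b ↔ rel G X a b := by
  rw [rel_union huv]
  constructor
  · rintro (h' | ⟨h1, h2⟩ | ⟨h1, h2⟩)
    · exact h'
    · exact rel_trans h1 (rel_trans h h2)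
    · exact rel_trans h1 (rel_trans (rel_symm h) h2)
  · exact Or.inl

lemma comp_union_of_rel {X : Set E} {e : E} {u v : V} (huv : G.ends e = (u, v))
    (h : rel G X u v) (w : V) : G.comp (X ∪ {e}) w = G.comp X w := by
  ext x; exact rel_union_of_rel huv h

lemma comp_union_of_not_rel {X : Set E} {e : E} {u v w : V} (huv : G.ends e = (u, v))
    (hwu : ¬ rel G X w u) (hwv : ¬ rel G X w v) : G.comp (X ∪ {e}) w = G.comp X w := by
  ext x
  rw [mem_comp, mem_comp, rel_union huv]
  constructor
  · rintro (h' | ⟨h1, h2⟩ | ⟨h1, h2⟩)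
    · exact h'
    · exact absurd h1 hwu
    · exact absurd h1 hwv
  · exact Or.inl

lemma comp_union_merge {X : Set E} {e : E} {u v : V} (huv : G.ends e = (u, v)) :
    G.comp (X ∪ {e}) u = G.comp X u ∪ G.comp X v := by
  ext x
  rw [mem_comp, rel_union huv]
  constructor
  · rintro (h' | ⟨h1, h2⟩ | ⟨h1, h2⟩)
    · exact Or.inl h'
    · exact Or.inr h2
    · exact Or.inr (rel_trans (rel_symm h1) (rel_trans h1 (rel_trans (rel_symm h1) h2)))
  · rintro (h | h)
    · exact Or.inl h
    · exact Or.inr (Or.inl ⟨rel_refl u, rel_symm (rel_symm h)⟩)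

variable (G) in
def Bal (X : Set E) (K : Set V) : Prop :=
  ∀ C ⊆ X, G.verts C ⊆ K → G.IsCycle C → Even (G.negCount C)

lemma balancedComponent_iff {X : Set E} {K : Set V} :
    G.BalancedComponent X K ↔ (∃ v, K = G.comp X v) ∧ Bal G X K := Iff.rfl

lemma bal_anti {X Y : Set E} {K K' : Set V} (hXY : X ⊆ Y) (hK : K ⊆ K')
    (h : Bal G Y K') : Bal G X K :=
  fun C hC hv hcyc => h C (hC.trans hXY) (hv.trans hK) hcyc

lemma fst_mem_verts {C : Set E} {e : E} (he : e ∈ C) : (G.ends e).1 ∈ G.verts C :=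
  ⟨e, he, Or.inl rfl⟩

lemma bal_union_of_not_mem {X : Set E} {e : E} {u v : V} (huv : G.ends e = (u, v))
    {K : Set V} (hu : u ∉ K) (h : Bal G X K) : Bal G (X ∪ {e}) K := by
  intro C hC hv hcyc
  have hCX : C ⊆ X := by
    intro f hf
    rcases hC hf with hf' | hf'
    · exact hf'
    · exfalso
      rcases hf' with rfl
      have : (G.ends f).1 ∈ G.verts C := fst_mem_verts hf
      rw [huv] at this
      exact hu (hv this)
  exact h C hCX hv hcyc

/-! ### The double cover -/

variable (G) in
def R2 (X : Set E) : V × Bool → V × Bool → Prop := fun p q =>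
  ∃ e ∈ X, (G.ends e = (p.1, q.1) ∨ G.ends e = (q.1, p.1)) ∧ q.2 = xor p.2 (!G.sign e)

variable (G) in
def rel2 (X : Set E) : V × Bool → V × Bool → Prop := Relation.EqvGen (R2 G X)

lemma rel2_refl {X : Set E} (p : V × Bool) : rel2 G X p p :=
  (Relation.EqvGen.is_equivalence _).refl p
lemma rel2_symm {X : Set E} {p q : V × Bool} (h : rel2 G X p q) : rel2 G X q p :=
  (Relation.EqvGen.is_equivalence _).symm h
lemma rel2_trans {X : Set E} {p q r : V × Bool} (h : rel2 G X p q) (h' : rel2 G X q r) :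
    rel2 G X p r := (Relation.EqvGen.is_equivalence _).trans h h'

lemma rel2_mono {X Y : Set E} (h : X ⊆ Y) {p q : V × Bool} (hpq : rel2 G X p q) :
    rel2 G Y p q := by
  refine Relation.EqvGen.mono (fun p q hpq => ?_) _ _ hpq
  obtain ⟨e, he, h'⟩ := hpq
  exact ⟨e, h he, h'⟩

lemma rel2_proj {X : Set E} {p q : V × Bool} (h : rel2 G X p q) : rel G X p.1 q.1 := by
  induction h with
  | rel p q hpq => obtain ⟨e, he, h', _⟩ := hpq; exact Relation.EqvGen.rel _ _ ⟨e, he, h'⟩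
  | refl p => exact rel_refl _
  | symm p q _ ih => exact rel_symm ih
  | trans p q r _ _ ih1 ih2 => exact rel_trans ih1 ih2

lemma rel2_flip {X : Set E} {p q : V × Bool} (h : rel2 G X p q) :
    rel2 G X (p.1, !p.2) (q.1, !q.2) := by
  induction h with
  | rel p q hpq =>
    obtain ⟨e, he, h', hx⟩ := hpq
    exact Relation.EqvGen.rel _ _ ⟨e, he, h', by rw [hx]; cases p.2 <;> cases G.sign e <;> rfl⟩
  | refl p => exact rel2_refl _
  | symm p q _ ih => exact rel2_symm ih
  | trans p q r _ _ ih1 ih2 => exact rel2_trans ih1 ih2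

lemma rel2_lift {X : Set E} {x y : V} (h : rel G X x y) (s : Bool) :
    ∃ t, rel2 G X (x, s) (y, t) := by
  induction h generalizing s with
  | rel x y hxy =>
    obtain ⟨e, he, h'⟩ := hxy
    refine ⟨xor s (!G.sign e), Relation.EqvGen.rel _ _ ⟨e, he, ?_, rfl⟩⟩
    rcases h' with h' | h' <;> simp [h']
  | refl x => exact ⟨s, rel2_refl _⟩
  | symm x y _ ih =>
    obtain ⟨t0, h0⟩ := ih true
    have h0' : rel2 G X (y, t0) (x, true) := rel2_symm h0
    by_cases hs : s = t0
    · exact ⟨true, hs ▸ h0'⟩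
    · have : s = !t0 := by cases s <;> cases t0 <;> simp_all
      subst this
      exact ⟨false, by simpa using rel2_flip h0'⟩
  | trans x y z _ _ ih1 ih2 =>
    obtain ⟨t, ht⟩ := ih1 s
    obtain ⟨t', ht'⟩ := ih2 t
    exact ⟨t', rel2_trans ht ht'⟩

variable (G) in
def PB (X : Set E) (v : V) : Prop := ¬ rel2 G X (v, true) (v, false)

lemma PB_not_self {X : Set E} {v : V} (h : PB G X v) (s : Bool) :
    ¬ rel2 G X (v, s) (v, !s) := by
  intro h'
  cases s
  · exact h (rel2_symm h')
  · exact h h'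

lemma PB_unique {X : Set E} {v w : V} (h : PB G X v) {s a b : Bool}
    (h1 : rel2 G X (v, s) (w, a)) (h2 : rel2 G X (v, s) (w, b)) : a = b := by
  by_contra hab
  have hb : b = !a := by cases a <;> cases b <;> simp_all
  subst hb
  have := rel2_trans h1 (rel2_trans (rel2_symm (by simpa using rel2_flip h2 : rel2 G X (v, !s) (w, a))) (by simpa using rel2_flip h1 : rel2 G X (v, !s) (w, !a)))
  exact PB_not_self h s (rel2_trans h1 (rel2_symm (by simpa using rel2_flip h2)))

lemma PB_of_rel {X : Set E} {v w : V} (hvw : rel G X v w) (h : PB G X v) : PB G X w := by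
  intro hw
  obtain ⟨t, ht⟩ := rel2_lift hvw true
  have h2 : rel2 G X (w, t) (w, !t) := by
    cases t
    · exact rel2_symm hw
    · exact hw
  have h3 := rel2_trans ht h2
  exact absurd (PB_unique h ht h3) (by cases t <;> simp)

lemma PB_anti {X Y : Set E} (h : X ⊆ Y) {v : V} (hv : PB G Y v) : PB G X v :=
  fun h' => hv (rel2_mono h h')

lemma surgery {X : Set E} {e : E} {u v : V} (huv : G.ends e = (u, v))
    (hu : PB G X u) (hv : PB G X v)
    (h2 : rel2 G (X ∪ {e}) (u, true) (u, false)) :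
    ∃ a b, xor a b ≠ !G.sign e ∧ rel2 G X (u, a) (v, b) := by
  by_contra H
  push_neg at H
  set n := !G.sign e with hn
  have HH : ∀ a b : Bool, rel2 G X (u, a) (v, b) → xor a b = n := by
    intro a b hr
    by_contra hab
    exact H a b hab hr
  set T : Set (V × Bool) := {p | rel2 G X (u, true) p ∨ rel2 G X (v, !n) p} with hT
  have key : ∀ p q : V × Bool, R2 G (X ∪ {e}) p q → (p ∈ T ↔ q ∈ T) := by
    rintro ⟨p1, a⟩ ⟨q1, b⟩ hpq
    obtain ⟨f, hf, hor, hq2⟩ := hpq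
    simp only at hq2
    rcases hf with hf | hf
    · have step : rel2 G X (p1, a) (q1, b) := Relation.EqvGen.rel _ _ ⟨f, hf, hor, hq2⟩
      constructor
      · rintro (h | h)
        · exact Or.inl (rel2_trans h step)
        · exact Or.inr (rel2_trans h step)
      · rintro (h | h)
        · exact Or.inl (rel2_trans h (rel2_symm step))
        · exact Or.inr (rel2_trans h (rel2_symm step))
    · rcases hf with rfl
      rw [huv] at hor
      rw [← hn] at hq2
      rcases hor with h1 | h1 <;> rw [Prod.mk.injEq] at h1 <;>
        obtain ⟨rfl, rfl⟩ := h1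
      · -- p = (u, a), q = (v, xor a n)
        subst hq2
        constructor
        · rintro (h | h)
          · have ha : true = a := PB_unique hu (rel2_refl _) h
            subst ha
            exact Or.inr (by
              have : xor true n = !n := by cases n <;> rfl
              rw [this]; exact rel2_refl _)
          · have ha : xor a (!n) = n := HH a (!n) (rel2_symm h)
            have ha' : a = true := by revert ha; cases a <;> cases n <;> decide
            subst ha'
            exact Or.inr (by
              have : xor true n = !n := by cases n <;> rfl
              rw [this]; exact rel2_refl _)
        · rintro (h | h)
          · have ha : xor true (xor a n) = n := HH true (xor a n) h
            have ha' : a = true := by revert ha; cases a <;> cases n <;> decide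
            subst ha'
            exact Or.inl (rel2_refl _)
          · have ha : (!n) = xor a n := PB_unique hv (rel2_refl _) h
            have ha' : a = true := by revert ha; cases a <;> cases n <;> decide
            subst ha'
            exact Or.inl (rel2_refl _)
      · -- p = (v, a), q = (u, xor a n)
        subst hq2
        constructor
        · rintro (h | h)
          · have ha : xor true a = n := HH true a h
            have ha' : a = !n := by revert ha; cases a <;> cases n <;> decide
            subst ha'
            have : xor (!n) n = true := by cases n <;> rfl
            rw [this]
            exact Or.inl (rel2_refl _)
          · have ha : a = !n := (PB_unique hv (rel2_refl _) h).symm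
            subst ha
            have : xor (!n) n = true := by cases n <;> rfl
            rw [this]
            exact Or.inl (rel2_refl _)
        · rintro (h | h)
          · have ha : true = xor a n := PB_unique hu (rel2_refl _) h
            have ha' : a = !n := by revert ha; cases a <;> cases n <;> decide
            subst ha'
            exact Or.inr (rel2_refl _)
          · have ha : xor (xor a n) (!n) = n := HH (xor a n) (!n) (rel2_symm h)
            have ha' : a = !n := by revert ha; cases a <;> cases n <;> decide
            subst ha'
            exact Or.inr (rel2_refl _)
  have claim : ∀ p q : V × Bool, rel2 G (X ∪ {e}) p q → (p ∈ T ↔ q ∈ T) := by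
    intro p q h
    induction h with
    | rel p q hpq => exact key p q hpq
    | refl p => exact Iff.rfl
    | symm p q _ ih => exact ih.symm
    | trans p q r _ _ ih1 ih2 => exact ih1.trans ih2
  have hT1 : (u, true) ∈ T := Or.inl (rel2_refl _)
  have hT2 : (u, false) ∈ T := (claim _ _ h2).mp hT1
  rcases hT2 with h | h
  · exact hu h
  · have := HH false (!n) (rel2_symm h)
    revert this; cases n <;> decide

lemma PB_union_of_not_rel {X : Set E} {e : E} {u v : V} (huv : G.ends e = (u, v))
    (huv' : ¬ rel G X u v) (hu : PB G X u) (hv : PB G X v) : PB G (X ∪ {e}) u := by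
  intro h2
  obtain ⟨a, b, -, hr⟩ := surgery huv hu hv h2
  exact huv' (rel2_proj hr)

/-! ### PB implies balanced -/

lemma bal_of_PB [Fintype V] [Fintype E] {X : Set E} {v : V} (hPB : PB G X v) :
    Bal G X (G.comp X v) := by
  classical
  intro C hCX hverts hcyc
  -- the potential
  set θ : V → Bool := fun w => if rel2 G X (v, true) (w, true) then true else false with hθ
  have hθspec : ∀ w, rel G X v w → rel2 G X (v, true) (w, θ w) := by
    intro w hw
    by_cases h : rel2 G X (v, true) (w, true)
    · simpa [hθ, h] using h
    · obtain ⟨t, ht⟩ := rel2_lift hw true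
      have : t = false := by
        cases t with
        | false => rfl
        | true => exact absurd ht h
      subst this
      simpa [hθ, h] using ht
  have hcons : ∀ e ∈ C, θ ((G.ends e).2) = xor (θ ((G.ends e).1)) (!G.sign e) := by
    intro e he
    have hx : (G.ends e).1 ∈ G.comp X v := hverts (fst_mem_verts he)
    have hy : (G.ends e).2 ∈ G.comp X v := hverts ⟨e, he, Or.inr rfl⟩
    have h1 : rel2 G X (v, true) ((G.ends e).1, θ ((G.ends e).1)) := hθspec _ hx
    have h2 : rel2 G X (v, true) ((G.ends e).2, θ ((G.ends e).2)) := hθspec _ hy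
    have step : R2 G X ((G.ends e).1, θ ((G.ends e).1))
        ((G.ends e).2, xor (θ ((G.ends e).1)) (!G.sign e)) :=
      ⟨e, hCX he, Or.inl rfl, rfl⟩
    have h3 := rel2_trans h1 (Relation.EqvGen.rel _ _ step)
    exact PB_unique hPB h2 h3
  -- counting
  have hCfin : C.Finite := Set.toFinite C
  set F : Finset E := hCfin.toFinset with hF
  have hmemF : ∀ e, e ∈ F ↔ e ∈ C := fun e => Set.Finite.mem_toFinset _
  set W : Finset V := ((Set.toFinite (G.verts C)).toFinset).filter (fun w => θ w = true)
    with hW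
  have hdegsum : ∀ w ∈ W, G.deg C w = 2 := by
    intro w hw
    rw [hW, Finset.mem_filter] at hw
    exact hcyc.2.2 w ((Set.Finite.mem_toFinset _).mp hw.1)
  have hdeg_eq : ∀ w : V, G.deg C w =
      ∑ e ∈ F, ((if (G.ends e).1 = w then 1 else 0) + (if (G.ends e).2 = w then 1 else 0)) := by
    intro w
    rw [SignedGraph.deg, ← finsum_mem_coe_finset]
    congr 1
    rw [hF, Set.Finite.coe_toFinset]
  have swap : (∑ w ∈ W, G.deg C w) = ∑ e ∈ F,
      ((if (G.ends e).1 ∈ W then 1 else 0) + (if (G.ends e).2 ∈ W then 1 else 0)) := by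
    calc (∑ w ∈ W, G.deg C w)
        = ∑ w ∈ W, ∑ e ∈ F, ((if (G.ends e).1 = w then 1 else 0)
            + (if (G.ends e).2 = w then 1 else 0)) :=
          Finset.sum_congr rfl (fun w _ => hdeg_eq w)
      _ = ∑ e ∈ F, ∑ w ∈ W, ((if (G.ends e).1 = w then 1 else 0)
            + (if (G.ends e).2 = w then 1 else 0)) := Finset.sum_comm
      _ = ∑ e ∈ F, ((if (G.ends e).1 ∈ W then 1 else 0)
            + (if (G.ends e).2 ∈ W then 1 else 0)) := by
          refine Finset.sum_congr rfl fun e _ => ?_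
          rw [Finset.sum_add_distrib, Finset.sum_ite_eq, Finset.sum_ite_eq]
  have key : Even (∑ e ∈ F,
      ((if (G.ends e).1 ∈ W then 1 else 0) + (if (G.ends e).2 ∈ W then 1 else 0))) := by
    rw [← swap]
    have : (∑ w ∈ W, G.deg C w) = ∑ w ∈ W, 2 := Finset.sum_congr rfl hdegsum
    rw [this, Finset.sum_const, smul_eq_mul]
    exact ⟨W.card, by ring⟩
  rw [Finset.even_sum_iff_even_card_odd] at key
  have hset : {e ∈ C | G.sign e = false} =
      ↑(F.filter (fun e => Odd ((if (G.ends e).1 ∈ W then 1 else 0)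
        + (if (G.ends e).2 ∈ W then (1:ℕ) else 0)))) := by
    ext e
    simp only [Finset.coe_filter, Set.mem_setOf_eq, hmemF]
    refine and_congr_right fun heC => ?_
    have hx : (G.ends e).1 ∈ G.verts C := fst_mem_verts heC
    have hy : (G.ends e).2 ∈ G.verts C := ⟨e, heC, Or.inr rfl⟩
    have hxW : ((G.ends e).1 ∈ W) ↔ θ ((G.ends e).1) = true := by
      rw [hW, Finset.mem_filter, Set.Finite.mem_toFinset]
      exact ⟨fun h => h.2, fun h => ⟨hx, h⟩⟩
    have hyW : ((G.ends e).2 ∈ W) ↔ θ ((G.ends e).2) = true := by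
      rw [hW, Finset.mem_filter, Set.Finite.mem_toFinset]
      exact ⟨fun h => h.2, fun h => ⟨hy, h⟩⟩
    have hiff : (G.sign e = false) ↔ θ ((G.ends e).1) ≠ θ ((G.ends e).2) := by
      have hc := hcons e heC
      cases hs : G.sign e
      · rw [hs] at hc
        simp only [Bool.not_false, Bool.xor_true] at hc
        rw [hc]
        simp
      · rw [hs] at hc
        simp only [Bool.not_true, Bool.xor_false] at hc
        rw [hc]
        simp
    rw [hiff]
    by_cases hA : (G.ends e).1 ∈ W <;> by_cases hB : (G.ends e).2 ∈ W
    · rw [hxW] at hA; rw [hyW] at hB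
      rw [if_pos (hxW.mpr hA), if_pos (hyW.mpr hB), Nat.odd_iff]
      norm_num [hA, hB]
    · rw [hxW] at hA
      have hB' : θ ((G.ends e).2) = false := by
        cases h2 : θ ((G.ends e).2) with
        | false => rfl
        | true => exact absurd (hyW.mpr h2) hB
      rw [if_pos (hxW.mpr hA), if_neg hB, Nat.odd_iff]
      norm_num [hA, hB']
    · rw [hyW] at hB
      have hA' : θ ((G.ends e).1) = false := by
        cases h2 : θ ((G.ends e).1) with
        | false => rfl
        | true => exact absurd (hxW.mpr h2) hA
      rw [if_neg hA, if_pos (hyW.mpr hB), Nat.odd_iff]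
      norm_num [hA', hB]
    · have hA' : θ ((G.ends e).1) = false := by
        cases h2 : θ ((G.ends e).1) with
        | false => rfl
        | true => exact absurd (hxW.mpr h2) hA
      have hB' : θ ((G.ends e).2) = false := by
        cases h2 : θ ((G.ends e).2) with
        | false => rfl
        | true => exact absurd (hyW.mpr h2) hB
      rw [if_neg hA, if_neg hB, Nat.odd_iff]
      norm_num [hA', hB']
  have : G.negCount C = (F.filter (fun e => Odd ((if (G.ends e).1 ∈ W then 1 else 0)
      + (if (G.ends e).2 ∈ W then (1:ℕ) else 0)))).card := by
    rw [SignedGraph.negCount, hset, Set.ncard_coe_finset]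
  rw [this]
  exact key

/-! ### Walks -/

variable (G) in
inductive W (X : Set E) : V → List V → List E → V → Prop
  | nil (v : V) : W X v [v] [] v
  | cons {a b c : V} {vs : List V} {e : E} {l : List E} (he : e ∈ X)
      (hab : G.ends e = (a, b) ∨ G.ends e = (b, a)) (h : W X b vs l c) :
      W X a (a :: vs) (e :: l) c

variable (G) in
def np (l : List E) : ℕ := l.countP (fun e => !G.sign e)

lemma np_cons (e : E) (l : List E) : np G (e :: l) = (if G.sign e = false then 1 else 0) + np G l := by
  rw [np, List.countP_cons, np]
  cases h : G.sign e <;> simp [h] <;> omega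

lemma np_append (l m : List E) : np G (l ++ m) = np G l + np G m :=
  List.countP_append

lemma np_reverse (l : List E) : np G l.reverse = np G l :=
  List.Perm.countP_eq _ (List.reverse_perm l)

lemma W_length {X : Set E} {a b : V} {vs : List V} {l : List E} (h : W G X a vs l b) :
    vs.length = l.length + 1 := by
  induction h with
  | nil v => rfl
  | cons he hab h ih => simp [ih]

lemma W_head {X : Set E} {a b : V} {vs : List V} {l : List E} (h : W G X a vs l b) :
    ∃ t, vs = a :: t := by
  cases h with
  | nil => exact ⟨[], rfl⟩
  | cons he hab h => exact ⟨_, rfl⟩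

lemma W_last_decomp {X : Set E} {a b : V} {vs : List V} {l : List E} (h : W G X a vs l b) :
    ∃ ds, vs = ds ++ [b] := by
  induction h with
  | nil v => exact ⟨[], rfl⟩
  | cons he hab h ih =>
    obtain ⟨ds, hds⟩ := ih
    exact ⟨_ :: ds, by rw [hds]; rfl⟩

lemma W_edges_mem {X : Set E} {a b : V} {vs : List V} {l : List E} (h : W G X a vs l b) :
    ∀ e ∈ l, e ∈ X := by
  induction h with
  | nil v => simp
  | cons he hab h ih =>
    intro f hf
    rcases hf with _ | hf
    · exact he
    · exact ih _ (by assumption)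

lemma W_ends_mem {X : Set E} {a b : V} {vs : List V} {l : List E} (h : W G X a vs l b) :
    ∀ e ∈ l, (G.ends e).1 ∈ vs ∧ (G.ends e).2 ∈ vs := by
  induction h with
  | nil v => simp
  | cons he hab h ih =>
    rename_i a' b' c' vs' e' l'
    intro f hf
    rcases List.mem_cons.mp hf with rfl | hf
    · rcases hab with hab | hab <;> rw [hab]
      · exact ⟨List.mem_cons_self, by
          obtain ⟨t, ht⟩ := W_head h
          rw [ht]
          exact List.mem_cons_of_mem _ (List.mem_cons_self)⟩
      · refine ⟨by
          obtain ⟨t, ht⟩ := W_head h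
          rw [ht]
          exact List.mem_cons_of_mem _ (List.mem_cons_self), List.mem_cons_self⟩
    · obtain ⟨h1, h2⟩ := ih f hf
      exact ⟨List.mem_cons_of_mem _ h1, List.mem_cons_of_mem _ h2⟩

lemma W_mem_rel {X : Set E} {a b : V} {vs : List V} {l : List E} (h : W G X a vs l b) :
    ∀ x ∈ vs, rel G X a x := by
  induction h with
  | nil v =>
    intro x hx
    have hxv : x = v := by simpa using hx
    subst hxv
    exact rel_refl _
  | cons he hab h ih =>
    intro x hx
    rcases List.mem_cons.mp hx with rfl | hx
    · exact rel_refl _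
    · have hadj : G.adjIn X _ _ := ⟨_, he, hab⟩
      exact rel_trans (Relation.EqvGen.rel _ _ hadj) (ih x hx)

lemma W_connset {X : Set E} {a b : V} {vs : List V} {l : List E} (h : W G X a vs l b) :
    ∀ x ∈ vs, Relation.EqvGen (G.adjIn {e | e ∈ l}) a x := by
  induction h with
  | nil v =>
    intro x hx
    have hxv : x = v := by simpa using hx
    subst hxv
    exact (Relation.EqvGen.is_equivalence _).refl _
  | cons he hab h ih =>
    rename_i a' b' c' vs' e' l'
    intro x hx
    have hmono : ∀ y z, G.adjIn {e | e ∈ l'} y z → G.adjIn {e | e ∈ e' :: l'} y z :=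
      fun y z => adjIn_mono (fun f hf => List.mem_cons_of_mem _ hf)
    rcases List.mem_cons.mp hx with rfl | hx
    · exact (Relation.EqvGen.is_equivalence _).refl _
    · have hadj : G.adjIn {e | e ∈ e' :: l'} a' b' := ⟨e', List.mem_cons_self, hab⟩
      exact (Relation.EqvGen.is_equivalence _).trans
        (Relation.EqvGen.rel _ _ hadj)
        (Relation.EqvGen.mono hmono _ _ (ih x hx))

lemma W_snoc {X : Set E} {a b c : V} {vs : List V} {l : List E} {e : E}
    (h : W G X a vs l b) (he : e ∈ X) (hbc : G.ends e = (b, c) ∨ G.ends e = (c, b)) :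
    W G X a (vs ++ [c]) (l ++ [e]) c := by
  induction h with
  | nil v => exact W.cons he hbc (W.nil c)
  | cons he' hab h ih => exact W.cons he' hab (ih hbc)

lemma W_reverse {X : Set E} {a b : V} {vs : List V} {l : List E} (h : W G X a vs l b) :
    W G X b vs.reverse l.reverse a := by
  induction h with
  | nil v => exact W.nil v
  | cons he hab h ih =>
    simp only [List.reverse_cons]
    exact W_snoc ih he (hab.symm.imp (fun h => h) (fun h => h))

lemma W_append {X : Set E} {a b c : V} {vs1 vs2 : List V} {l1 l2 : List E}
    (h1 : W G X a vs1 l1 b) (h2 : W G X b vs2 l2 c) :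
    W G X a (vs1 ++ vs2.tail) (l1 ++ l2) c := by
  induction h1 with
  | nil v =>
    obtain ⟨t, rfl⟩ := W_head h2
    simpa using h2
  | cons he hab h ih => exact W.cons he hab (ih h2)

lemma W_split {X : Set E} {b x : V} {vs₂ : List V} :
    ∀ (vs₁ : List V) {a : V} {vs : List V} {l : List E},
      W G X a vs l b → vs = vs₁ ++ x :: vs₂ →
      ∃ l₁ l₂, l = l₁ ++ l₂ ∧ l₁.length = vs₁.length ∧
        W G X a (vs₁ ++ [x]) l₁ x ∧ W G X x (x :: vs₂) l₂ b := by
  intro vs₁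
  induction vs₁ with
  | nil =>
    intro a vs l h hvs
    simp only [List.nil_append] at hvs
    subst hvs
    obtain ⟨t, heq⟩ := W_head h
    injection heq with h1 h2
    subst h1
    exact ⟨[], l, rfl, rfl, W.nil x, h⟩
  | cons y ys ih =>
    intro a vs l h hvs
    cases h with
    | nil v =>
      exfalso
      have := congrArg List.length hvs
      simp at this
    | cons he hab h' =>
      rename_i b' vs' e l'
      simp only [List.cons_append] at hvs
      injection hvs with h1 h2
      subst h1
      obtain ⟨l₁, l₂, rfl, hlen, hw1, hw2⟩ := ih h' h2
      exact ⟨e :: l₁, l₂, rfl, by simp [hlen], W.cons he hab hw1, hw2⟩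

lemma rel2_to_walk {X : Set E} {p q : V × Bool} (h : rel2 G X p q) :
    ∃ vs l, W G X p.1 vs l q.1 ∧ np G l % 2 = (if p.2 = q.2 then 0 else 1) := by
  induction h with
  | rel p q hpq =>
    obtain ⟨e, he, hor, hq2⟩ := hpq
    refine ⟨[p.1, q.1], [e], W.cons he ?_ (W.nil q.1), ?_⟩
    · rcases hor with h | h
      · exact Or.inl (by rw [h])
      · exact Or.inr (by rw [h])
    · rw [np_cons, np]
      simp only [List.countP_nil]
      cases hs : G.sign e <;> rw [hs] at hq2 <;> simp at hq2 <;>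
        rw [hq2] <;> cases hp : p.2 <;> simp
  | refl p => exact ⟨[p.1], [], W.nil p.1, by simp [np]⟩
  | symm p q _ ih =>
    obtain ⟨vs, l, hw, hnp⟩ := ih
    refine ⟨vs.reverse, l.reverse, W_reverse hw, ?_⟩
    rw [np_reverse, hnp]
    by_cases h : p.2 = q.2
    · rw [if_pos h, if_pos h.symm]
    · rw [if_neg h, if_neg (fun hh : q.2 = p.2 => h hh.symm)]
  | trans p q r _ _ ih1 ih2 =>
    obtain ⟨vs1, l1, hw1, hnp1⟩ := ih1
    obtain ⟨vs2, l2, hw2, hnp2⟩ := ih2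
    refine ⟨vs1 ++ vs2.tail, l1 ++ l2, W_append hw1 hw2, ?_⟩
    rw [np_append, Nat.add_mod, hnp1, hnp2]
    by_cases h1 : p.2 = q.2 <;> by_cases h2 : q.2 = r.2
    · rw [if_pos h1, if_pos h2, if_pos (h1.trans h2)]
    · rw [if_pos h1, if_neg h2, if_neg (fun hh : p.2 = r.2 => h2 (h1.symm.trans hh))]
    · rw [if_neg h1, if_pos h2, if_neg (fun hh : p.2 = r.2 => h1 (hh.trans h2.symm))]
    · have h3 : p.2 = r.2 := by
        cases hp : p.2 <;> cases hq : q.2 <;> cases hr : r.2 <;> simp_all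
      rw [if_neg h1, if_neg h2, if_pos h3]

/-! ### Degree computations -/

lemma deg_list (l : List E) (x : V) :
    G.deg {e | e ∈ l} x =
      ∑ e ∈ l.toFinset, ((if (G.ends e).1 = x then 1 else 0) +
        (if (G.ends e).2 = x then 1 else 0)) := by
  classical
  rw [SignedGraph.deg, ← finsum_mem_coe_finset]
  congr 1
  ext e
  simp

lemma deg_cons {e : E} {l : List E} (he : e ∉ l) (x : V) :
    G.deg {f | f ∈ e :: l} x =
      ((if (G.ends e).1 = x then 1 else 0) + (if (G.ends e).2 = x then 1 else 0)) +
        G.deg {f | f ∈ l} x := by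
  classical
  rw [deg_list, deg_list, List.toFinset_cons, Finset.sum_insert (by simpa using he)]

lemma deg_two_edges {l : List E} {e f : E} {x : V} (hef : e ≠ f) (he : e ∈ l) (hf : f ∈ l)
    (hte : G.touches e x) (htf : G.touches f x) : 2 ≤ G.deg {e | e ∈ l} x := by
  classical
  rw [deg_list]
  have hsub : ({e, f} : Finset E) ⊆ l.toFinset := by
    intro g hg
    simp only [Finset.mem_insert, Finset.mem_singleton] at hg
    rcases hg with rfl | rfl <;> simpa
  have hle := Finset.sum_le_sum_of_subset (f := fun e =>
    ((if (G.ends e).1 = x then 1 else 0) + (if (G.ends e).2 = x then (1:ℕ) else 0))) hsub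
  refine le_trans ?_ hle
  rw [Finset.sum_pair hef]
  have h1 : 1 ≤ (if (G.ends e).1 = x then 1 else 0) + (if (G.ends e).2 = x then (1:ℕ) else 0) := by
    rcases hte with h | h <;> simp [h]
  have h2 : 1 ≤ (if (G.ends f).1 = x then 1 else 0) + (if (G.ends f).2 = x then (1:ℕ) else 0) := by
    rcases htf with h | h <;> simp [h]
  omega

lemma path_edges_nodup {X : Set E} {a b : V} {vs : List V} {l : List E}
    (h : W G X a vs l b) (hnd : vs.Nodup) : l.Nodup := by
  induction h with
  | nil v => simp
  | cons he hab h' ih =>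
    rename_i a' b' c' vs' e' l'
    rw [List.nodup_cons] at hnd ⊢
    refine ⟨?_, ih hnd.2⟩
    intro hel
    have hmem := W_ends_mem h' e' hel
    rcases hab with hab | hab <;> rw [hab] at hmem
    · exact hnd.1 hmem.1
    · exact hnd.1 hmem.2

lemma W_ne {X : Set E} {a b : V} {vs : List V} {l : List E}
    (h : W G X a vs l b) (hnd : vs.Nodup) (hl : l ≠ []) : a ≠ b := by
  cases h with
  | nil v => exact absurd rfl hl
  | cons he hab h' =>
    obtain ⟨ds, hds⟩ := W_last_decomp h'
    intro hab'
    subst hab'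
    rw [List.nodup_cons] at hnd
    exact hnd.1 (by rw [hds]; simp)

lemma ind_eq {e : E} {a b : V} (hab : G.ends e = (a, b) ∨ G.ends e = (b, a)) (y : V) :
    ((if (G.ends e).1 = y then 1 else 0) + (if (G.ends e).2 = y then (1:ℕ) else 0)) =
      ((if y = a then 1 else 0) + (if y = b then 1 else 0)) := by
  have main : ∀ (u v : V), G.ends e = (u, v) →
      ((if (G.ends e).1 = y then 1 else 0) + (if (G.ends e).2 = y then (1:ℕ) else 0)) =
        ((if y = u then 1 else 0) + (if y = v then 1 else 0)) := by
    intro u v hh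
    rw [hh]
    dsimp only
    by_cases h1 : y = u <;> by_cases h2 : y = v
    · rw [if_pos h1.symm, if_pos h2.symm, if_pos h1, if_pos h2]
    · rw [if_pos h1.symm, if_neg (fun hh2 => h2 hh2.symm), if_pos h1, if_neg h2]
    · rw [if_neg (fun hh2 => h1 hh2.symm), if_pos h2.symm, if_neg h1, if_pos h2]
    · rw [if_neg (fun hh2 => h1 hh2.symm), if_neg (fun hh2 => h2 hh2.symm), if_neg h1, if_neg h2]
  rcases hab with hh | hh
  · exact main a b hh
  · rw [main b a hh]
    exact add_comm _ _

lemma path_deg {X : Set E} {a b : V} {vs : List V} {l : List E}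
    (h : W G X a vs l b) (hnd : vs.Nodup) (hl : l ≠ []) (x : V) :
    G.deg {e | e ∈ l} x =
      (if x = a then 1 else 0) + (if x = b then 1 else 0) +
        (if x ∈ vs ∧ x ≠ a ∧ x ≠ b then 2 else 0) := by
  induction h with
  | nil v => exact absurd rfl hl
  | cons he hab h' ih =>
    rename_i a b c vs' e l'
    have hand := List.nodup_cons.mp hnd
    obtain ⟨t, hvst⟩ := W_head h'
    have hb' : b ∈ vs' := by rw [hvst]; exact List.mem_cons_self
    have hab' : a ≠ b := fun hh => hand.1 (hh ▸ hb')
    have henl : e ∉ l' := by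
      have := path_edges_nodup (W.cons he hab h') hnd
      exact (List.nodup_cons.mp this).1
    rw [deg_cons henl, ind_eq hab]
    cases hl' : l' with
    | nil =>
      subst hl'
      cases h' with
      | nil v =>
        have hz : G.deg {f | f ∈ ([] : List E)} x = 0 := by
          rw [deg_list]
          simp
        rw [hz]
        by_cases hxa : x = a <;> by_cases hxb : x = b <;>
          simp [hxa, hxb, List.mem_cons, hab', Ne.symm hab'] <;> omega
    | cons f l'' =>
      subst hl'
      have hlne : (f :: l'') ≠ [] := by simp
      have hc : b ≠ c := W_ne h' hand.2 hlne
      have hcvs : c ∈ vs' := by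
        obtain ⟨ds, hds⟩ := W_last_decomp h'
        rw [hds]; simp
      have hac : a ≠ c := fun hh => hand.1 (hh ▸ hcvs)
      rw [ih hand.2 hlne]
      by_cases hxb : x = b
      · subst hxb
        simp [List.mem_cons, Ne.symm hab', hc, hb']
      · by_cases hxa : x = a
        · subst hxa
          simp [List.mem_cons, hxb, hac, hand.1]
        · by_cases hxc : x = c
          · subst hxc
            simp [List.mem_cons, hxa, hxb, Ne.symm hac]
          · by_cases hxvs : x ∈ vs' <;>
              simp [List.mem_cons, hxa, hxb, hxc, hxvs]

lemma not_nodup_decomp {α : Type*} : ∀ {l : List α}, ¬ l.Nodup →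
    ∃ (p : List α) (x : α) (q r : List α), l = p ++ x :: q ++ x :: r := by
  intro l
  induction l with
  | nil => simp
  | cons a t ih =>
    intro h
    by_cases ha : a ∈ t
    · obtain ⟨q, r, rfl⟩ := List.append_of_mem ha
      exact ⟨[], a, q, r, rfl⟩
    · have hnt : ¬ t.Nodup := fun hn => h (List.nodup_cons.mpr ⟨ha, hn⟩)
      obtain ⟨p, x, q, r, rfl⟩ := ih hnt
      exact ⟨a :: p, x, q, r, rfl⟩

lemma negCount_list {l : List E} (hnd : l.Nodup) :
    G.negCount {e | e ∈ l} = np G l := by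
  classical
  rw [SignedGraph.negCount, np]
  have hset : {e ∈ {e | e ∈ l} | G.sign e = false} =
      ↑(l.toFinset.filter (fun e => G.sign e = false)) := by
    ext f
    simp
  rw [hset, Set.ncard_coe_finset]
  rw [List.countP_eq_length_filter]
  have : l.toFinset.filter (fun e => G.sign e = false) =
      (l.filter (fun e => !G.sign e)).toFinset := by
    ext f
    simp [List.mem_filter]
  rw [this, List.toFinset_card_of_nodup (hnd.filter _)]

lemma touches_of_or {e : E} {a b : V} (hab : G.ends e = (a, b) ∨ G.ends e = (b, a)) :
    G.touches e a ∧ G.touches e b := by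
  rcases hab with h | h <;> rw [SignedGraph.touches, SignedGraph.touches, h]
  · exact ⟨Or.inl rfl, Or.inr rfl⟩
  · exact ⟨Or.inr rfl, Or.inl rfl⟩

lemma W_nil_inv {X : Set E} {a b : V} {vs : List V} (h : W G X a vs [] b) :
    a = b ∧ vs = [a] := by
  cases h
  exact ⟨rfl, rfl⟩

lemma W_cons_inv {X : Set E} {a c : V} {vs : List V} {f : E} {l : List E}
    (h : W G X a vs (f :: l) c) :
    ∃ b vs', vs = a :: vs' ∧ (G.ends f = (a, b) ∨ G.ends f = (b, a)) ∧ f ∈ X ∧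
      W G X b vs' l c := by
  cases h with
  | cons hf hfab h' => exact ⟨_, _, rfl, hfab, hf, h'⟩

lemma extract {X : Set E} : ∀ (n : ℕ) (l : List E) (vs : List V) (w : V),
    l.length ≤ n → W G X w vs l w → np G l % 2 = 1 →
    ∃ C : Set E, C ⊆ {e | e ∈ l} ∧ G.IsCycle C ∧ ¬ Even (G.negCount C) := by
  intro n
  induction n with
  | zero =>
    intro l vs w hlen hw hnp
    have : l = [] := List.length_eq_zero_iff.mp (Nat.le_zero.mp hlen)
    subst this
    simp [np] at hnp
  | succ n ih =>
    intro l vs w hlen hw hnp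
    obtain ⟨ds, hds⟩ := W_last_decomp hw
    by_cases hnd : ds.Nodup
    swap
    · -- splitting case
      obtain ⟨p, x, q, r, hdecomp⟩ := not_nodup_decomp hnd
      have hvs : vs = p ++ x :: (q ++ x :: (r ++ [w])) := by
        rw [hds, hdecomp]; simp
      obtain ⟨l₁, l₂, rfl, hlen1, hw1, hw2⟩ := W_split p hw hvs
      have hvs2 : x :: (q ++ x :: (r ++ [w])) = (x :: q) ++ x :: (r ++ [w]) := by simp
      obtain ⟨m, l₃, rfl, hlen2, hwm, hw3⟩ := W_split (x :: q) hw2 hvs2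
      have hm1 : 1 ≤ m.length := by rw [hlen2]; simp
      have hl3 : 1 ≤ l₃.length := by
        have hL := W_length hw3
        simp only [List.length_cons, List.length_append] at hL
        omega
      have hLL : (l₁ ++ (m ++ l₃)).length = l₁.length + m.length + l₃.length := by
        rw [List.length_append, List.length_append]
        omega
      rw [hLL] at hlen
      by_cases hparm : np G m % 2 = 1
      · obtain ⟨C, hC1, hC2, hC3⟩ := ih m _ x (by omega) hwm hparm
        refine ⟨C, fun f hf => ?_, hC2, hC3⟩
        have hfm := hC1 hf
        simp only [Set.mem_setOf_eq, List.mem_append] at hfm ⊢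
        exact Or.inr (Or.inl hfm)
      · have houter : W G X w ((p ++ [x]) ++ (r ++ [w])) (l₁ ++ l₃) w := by
          have hvv := W_append hw1 hw3
          simpa using hvv
        have hpar : np G (l₁ ++ l₃) % 2 = 1 := by
          rw [np_append, np_append] at hnp
          rw [np_append]
          omega
        obtain ⟨C, hC1, hC2, hC3⟩ := ih (l₁ ++ l₃) _ w
          (by rw [List.length_append]; omega) houter hpar
        refine ⟨C, fun f hf => ?_, hC2, hC3⟩
        have hfm := hC1 hf
        simp only [Set.mem_setOf_eq, List.mem_append] at hfm ⊢
        tauto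
    · -- cycle case
      cases hlc : l with
      | nil =>
        rw [hlc] at hnp
        simp [np] at hnp
      | cons e l' =>
        rw [hlc] at hw hnp hlen
        obtain ⟨b, vs', rfl, hab, he, h'⟩ := W_cons_inv hw
        have hwfull := hw
        -- vs = w :: vs', hds : w :: vs' = ds ++ [w]
        cases hdsc : ds with
        | nil =>
          exfalso
          rw [hdsc] at hds
          have hLL := congrArg List.length hds
          have hL := W_length h'
          have h0 : vs' = [] := by simpa using hLL
          rw [h0] at hL
          simp at hL
        | cons d ds' =>
          rw [hdsc] at hds hnd
          injection hds with hd1 hd2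
          subst hd1
          have hndw := List.nodup_cons.mp hnd
          have hvs'nd : vs'.Nodup := by
            rw [hd2]
            exact ((List.perm_append_singleton _ _).nodup_iff).mpr hnd
          have hwvs' : w ∈ vs' := by rw [hd2]; simp
          cases hl'c : l' with
          | nil =>
            rw [hl'c] at h' hnp
            obtain ⟨hbw', hvs'⟩ := W_nil_inv h'
            rw [hbw'] at hab
            have hee : G.ends e = (w, w) := by
              rcases hab with h | h <;> exact h
            have hsign : G.sign e = false := by
              rw [np_cons, np] at hnp
              simp only [List.countP_nil] at hnp
              by_contra hs
              have hst : G.sign e = true := by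
                cases hs2 : G.sign e
                · exact absurd hs2 hs
                · rfl
              rw [hst] at hnp
              simp at hnp
            have hCeq : ({e} : Set E) = {f | f ∈ [e]} := by ext f; simp
            refine ⟨{e}, by simp [hl'c], ⟨⟨e, rfl⟩, ?_, ?_⟩, ?_⟩
            · intro x hx y hy
              obtain ⟨f, hf, htch⟩ := hx
              obtain ⟨g, hg, htch'⟩ := hy
              rcases hf with rfl
              rcases hg with rfl
              have hx : x = w := by
                rcases htch with h | h <;> rw [hee] at h <;> exact h.symm
              have hy : y = w := by
                rcases htch' with h | h <;> rw [hee] at h <;> exact h.symm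
              subst hx; subst hy
              exact (Relation.EqvGen.is_equivalence _).refl _
            · intro x hx
              obtain ⟨f, hf, htch⟩ := hx
              rcases hf with rfl
              have hx : x = w := by
                rcases htch with h | h <;> rw [hee] at h <;> exact h.symm
              subst hx
              rw [hCeq, deg_list]
              simp [hee]
            · rw [hCeq, negCount_list (by simp)]
              rw [np_cons, np]
              simp only [List.countP_nil]
              rw [hsign]
              intro hev
              rw [Nat.even_iff] at hev
              simp at hev
          | cons f l'' =>
            have hl'ne : l' ≠ [] := by rw [hl'c]; simp
            have h'c : W G X b vs' (f :: l'') w := hl'c ▸ h'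
            obtain ⟨t, hvst⟩ := W_head h'
            have hds'ne : ds' ≠ [] := by
              intro h0
              rw [h0] at hd2
              have hL := W_length h'
              rw [hd2, hl'c] at hL
              simp at hL
            have hbds' : b ∈ ds' := by
              cases hds'c : ds' with
              | nil => exact absurd hds'c hds'ne
              | cons d0 ds'' =>
                rw [hds'c] at hd2
                rw [hvst] at hd2
                injection hd2 with hh1 hh2
                rw [hh1]
                simp
            have hbw : b ≠ w := fun hh => hndw.1 (hh ▸ hbds')
            have htchs := touches_of_or hab
            have henl' : e ∉ l' := by
              intro hel'
              obtain ⟨b2, vs'', hvs''eq, hfab, hf, h''⟩ := W_cons_inv h'c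
              by_cases hef : e = f
              · -- then b2 = w and contradiction via nodup or parity
                have hb2 : b2 = w := by
                  subst hef
                  rcases hab with h1 | h1 <;> rcases hfab with h2 | h2 <;>
                    rw [h1, Prod.mk.injEq] at h2
                  · exact absurd h2.1.symm hbw
                  · exact h2.1.symm
                  · exact h2.2.symm
                  · exact absurd h2.2.symm hbw
                rw [hb2] at h''
                obtain ⟨t2, hvst2⟩ := W_head h''
                obtain ⟨ds2, hds2⟩ := W_last_decomp h''
                cases ht2c : t2 with
                | nil =>
                  -- vs'' = [w], l'' = [], l = [e, e] : parity contradiction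
                  rw [ht2c] at hvst2
                  have hL := W_length h''
                  rw [hvst2] at hL
                  simp at hL
                  rw [hl'c, hL, hef] at hnp
                  rw [np_cons, np_cons, np] at hnp
                  simp only [List.countP_nil] at hnp
                  rcases hs : G.sign f <;> rw [hs] at hnp <;> simp at hnp
                | cons t2h t2t =>
                  -- w appears twice in vs''
                  have hnd'' : vs''.Nodup := by
                    rw [hvs''eq] at hvs'nd
                    exact (List.nodup_cons.mp hvs'nd).2
                  rw [hvst2] at hnd'' hds2
                  have hwt2 : w ∈ t2 := by
                    cases hds2c : ds2 with
                    | nil =>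
                      rw [hds2c] at hds2
                      injection hds2 with hhw hht
                      rw [ht2c] at hht
                      simp at hht
                    | cons d2 ds2' =>
                      rw [hds2c] at hds2
                      injection hds2 with hh1 hht
                      rw [hht]
                      simp
                  exact (List.nodup_cons.mp hnd'').1 hwt2
              · have htfb : G.touches f b := (touches_of_or hfab).1
                have hfl' : f ∈ l' := by rw [hl'c]; simp
                have h2le := deg_two_edges (l := l') hef hel' hfl' htchs.2 htfb
                have hpd := path_deg h' hvs'nd hl'ne b
                rw [if_pos rfl, if_neg hbw] at hpd
                have hz : ¬ (b ∈ vs' ∧ b ≠ b ∧ b ≠ w) := by simp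
                rw [if_neg hz] at hpd
                omega
            -- main cycle construction
            have hvmem : ∀ x ∈ G.verts {g | g ∈ e :: l'}, x ∈ w :: vs' := by
              intro x hx
              obtain ⟨g, hg, htch⟩ := hx
              have hm := W_ends_mem hwfull g hg
              rcases htch with h | h <;> rw [← h]
              · exact hm.1
              · exact hm.2
            refine ⟨{g | g ∈ e :: l'}, fun f' hf' => by rw [hl'c] at hf'; exact hf',
              ⟨⟨e, by simp⟩, ?_, ?_⟩, ?_⟩
            · intro x hx y hy
              have hcx := W_connset hwfull x (hvmem x hx)
              have hcy := W_connset hwfull y (hvmem y hy)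
              exact (Relation.EqvGen.is_equivalence _).trans
                ((Relation.EqvGen.is_equivalence _).symm hcx) hcy
            · intro x hx
              have hxvs := hvmem x hx
              rw [deg_cons henl', ind_eq hab, path_deg h' hvs'nd hl'ne x]
              by_cases hxw : x = w
              · subst hxw
                simp [Ne.symm hbw, hwvs']
              · by_cases hxb : x = b
                · subst hxb
                  simp [hbw]
                · have hxvs'' : x ∈ vs' := by
                    rcases List.mem_cons.mp hxvs with h | h
                    · exact absurd h hxw
                    · exact h
                  simp [hxw, hxb, hxvs'']
            · have hndl : (e :: l').Nodup :=
                List.nodup_cons.mpr ⟨henl', path_edges_nodup h' hvs'nd⟩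
              rw [negCount_list hndl]
              intro hev
              rw [Nat.even_iff] at hev
              omega

lemma bal_to_PB {X : Set E} {v : V} (hbal : Bal G X (G.comp X v)) : PB G X v := by
  intro h2
  obtain ⟨vs, l, hwalk, hpar⟩ := rel2_to_walk h2
  rw [if_neg (by simp : ¬ ((true : Bool) = false))] at hpar
  obtain ⟨C, hC1, hC2, hC3⟩ := extract l.length l vs v le_rfl hwalk hpar
  refine hC3 (hbal C ?_ ?_ hC2)
  · exact fun f hf => W_edges_mem hwalk f (hC1 hf)
  · intro x hx
    obtain ⟨g, hg, htch⟩ := hx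
    have hm := W_ends_mem hwalk g (hC1 hg)
    have h1 := W_mem_rel hwalk _ hm.1
    have h2' := W_mem_rel hwalk _ hm.2
    rcases htch with h | h <;> rw [← h]
    · exact h1
    · exact h2'

/-! ### Counting balanced components -/

lemma numBal_le [Fintype V] [Fintype E] (X : Set E) :
    G.numBalancedComponents X ≤ Fintype.card V := by
  have hsub : {K | G.BalancedComponent X K} ⊆ Set.range (G.comp X) := by
    rintro K ⟨⟨v, rfl⟩, -⟩
    exact ⟨v, rfl⟩
  calc {K | G.BalancedComponent X K}.ncard
      ≤ (Set.range (G.comp X)).ncard := Set.ncard_le_ncard hsub (Set.toFinite _)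
    _ = ((G.comp X) '' Set.univ).ncard := by rw [Set.image_univ]
    _ ≤ (Set.univ : Set V).ncard := Set.ncard_image_le (Set.toFinite _)
    _ = Fintype.card V := by rw [Set.ncard_univ, Nat.card_eq_fintype_card]

variable (G) in
def drops (X : Set E) (e : E) : Prop :=
  (rel G X (G.ends e).1 (G.ends e).2 ∧ Bal G X (G.comp X (G.ends e).1) ∧
    ¬ Bal G (X ∪ {e}) (G.comp X (G.ends e).1)) ∨
  (¬ rel G X (G.ends e).1 (G.ends e).2 ∧
    (Bal G X (G.comp X (G.ends e).1) ∨ Bal G X (G.comp X (G.ends e).2)))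

lemma delta [Fintype V] [Fintype E] (X : Set E) (e : E) :
    (drops G X e → G.numBalancedComponents (X ∪ {e}) + 1 = G.numBalancedComponents X) ∧
    (¬ drops G X e → G.numBalancedComponents (X ∪ {e}) = G.numBalancedComponents X) := by
  classical
  have huv : G.ends e = ((G.ends e).1, (G.ends e).2) := rfl
  set u := (G.ends e).1 with hu_def
  set v := (G.ends e).2 with hv_def
  set A : Set (Set V) := {K | G.BalancedComponent X K} with hA
  set A' : Set (Set V) := {K | G.BalancedComponent (X ∪ {e}) K} with hA'
  have hnum : G.numBalancedComponents X = A.ncard := rfl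
  have hnum' : G.numBalancedComponents (X ∪ {e}) = A'.ncard := rfl
  by_cases hr : rel G X u v
  · -- u and v are in the same component of X
    have hcomp : ∀ w, G.comp (X ∪ {e}) w = G.comp X w := comp_union_of_rel huv hr
    have hsub : A' ⊆ A := by
      rintro K ⟨⟨w, rfl⟩, hbal⟩
      exact ⟨⟨w, hcomp w⟩, bal_anti Set.subset_union_left subset_rfl hbal⟩
    have hmem : ∀ K ∈ A, K ≠ G.comp X u → K ∈ A' := by
      rintro K ⟨⟨w, rfl⟩, hbal⟩ hne
      have hu : u ∉ G.comp X w := fun hu => hne (comp_eq_of_rel hu)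
      exact ⟨⟨w, (hcomp w).symm⟩, bal_union_of_not_mem huv hu hbal⟩
    constructor
    · intro hD
      rcases hD with ⟨-, hbal, hnbal⟩ | ⟨hnr, -⟩
      swap
      · exact absurd hr hnr
      have hK₀A : G.comp X u ∈ A := ⟨⟨u, rfl⟩, hbal⟩
      have heq : A' = A \ {G.comp X u} := by
        apply Set.Subset.antisymm
        · intro K hK
          refine ⟨hsub hK, ?_⟩
          intro hKe
          rw [Set.mem_singleton_iff] at hKe
          subst hKe
          exact hnbal hK.2
        · rintro K ⟨hKA, hKne⟩
          exact hmem _ hKA (by simpa using hKne)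
      rw [hnum', hnum, heq]
      exact Set.ncard_diff_singleton_add_one hK₀A (Set.toFinite _)
    · intro hnD
      have heq : A' = A := by
        apply Set.Subset.antisymm hsub
        intro K hKA
        by_cases hne : K = G.comp X u
        · subst hne
          have hbal' : Bal G (X ∪ {e}) (G.comp X u) := by
            by_contra hnbal
            exact hnD (Or.inl ⟨hr, hKA.2, hnbal⟩)
          exact ⟨⟨u, (hcomp u).symm⟩, hbal'⟩
        · exact hmem _ hKA hne
      rw [hnum', hnum, heq]
  · -- u and v in different components
    have hK12 : G.comp X u ≠ G.comp X v := fun hh => hr (rel_of_comp_eq hh)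
    set K1 := G.comp X u with hK1
    set K2 := G.comp X v with hK2
    set B : Set (Set V) := A \ {K1, K2} with hB
    have hmerge : G.comp (X ∪ {e}) u = K1 ∪ K2 := comp_union_merge huv
    have hclass : ∀ w, w ∈ K1 ∪ K2 → G.comp (X ∪ {e}) w = K1 ∪ K2 := by
      intro w hw
      rcases hw with hw | hw
      · rw [← comp_eq_of_rel (rel_mono Set.subset_union_left (hw : rel G X u w)), hmerge]
      · have hrv : rel G (X ∪ {e}) v w := rel_mono Set.subset_union_left hw
        have huv' : rel G (X ∪ {e}) u v :=
          Relation.EqvGen.rel _ _ ((adjIn_union huv).mpr (Or.inr (Or.inl ⟨rfl, rfl⟩)))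
        rw [← comp_eq_of_rel (rel_trans huv' hrv), hmerge]
    have hclass2 : ∀ w, w ∉ K1 ∪ K2 → G.comp (X ∪ {e}) w = G.comp X w := by
      intro w hw
      refine comp_union_of_not_rel huv (fun hwu => hw (Or.inl (rel_symm hwu)))
        (fun hwv => hw (Or.inr (rel_symm hwv)))
    have hBsub : B ⊆ A' := by
      rintro K ⟨hKA, hKne⟩
      simp only [Set.mem_insert_iff, Set.mem_singleton_iff, not_or] at hKne
      obtain ⟨⟨w, rfl⟩, hbal⟩ := hKA
      have hw12 : w ∉ K1 ∪ K2 := by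
        rintro (hw | hw)
        · exact hKne.1 (comp_eq_of_rel (rel_symm hw))
        · exact hKne.2 (comp_eq_of_rel (rel_symm hw))
      have hu : u ∉ G.comp X w := fun hu =>
        hw12 (Or.inl ((mem_comp).mpr (rel_symm hu)))
      exact ⟨⟨w, (hclass2 w hw12).symm⟩, bal_union_of_not_mem huv hu hbal⟩
    have hA'sub : ∀ K ∈ A', K = K1 ∪ K2 ∨ K ∈ B := by
      rintro K ⟨⟨w, rfl⟩, hbal⟩
      by_cases hw12 : w ∈ K1 ∪ K2
      · exact Or.inl (hclass w hw12)
      · right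
        rw [hclass2 w hw12]
        refine ⟨⟨⟨w, rfl⟩, bal_anti Set.subset_union_left subset_rfl
          (by rw [← hclass2 w hw12]; exact hbal)⟩, ?_⟩
        simp only [Set.mem_insert_iff, Set.mem_singleton_iff, not_or]
        constructor
        · intro hh
          exact hw12 (Or.inl (hh ▸ comp_self w))
        · intro hh
          exact hw12 (Or.inr (hh ▸ comp_self w))
    have hK12B : K1 ∪ K2 ∉ B := by
      rintro ⟨⟨⟨w, hwe⟩, -⟩, -⟩
      have hw : w ∈ K1 ∪ K2 := by rw [hwe]; exact comp_self w
      rcases hw with hw | hw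
      · have h1 : G.comp X w = K1 := (comp_eq_of_rel (hw : rel G X u w)).symm
        have hv : v ∈ K1 ∪ K2 := Or.inr (comp_self v)
        rw [hwe, h1] at hv
        exact hr hv
      · have h1 : G.comp X w = K2 := (comp_eq_of_rel (hw : rel G X v w)).symm
        have hu2 : u ∈ K1 ∪ K2 := Or.inl (comp_self u)
        rw [hwe, h1] at hu2
        exact hr (rel_symm hu2)
    by_cases hb12 : Bal G X K1 ∧ Bal G X K2
    · have hA'eq : A' = insert (K1 ∪ K2) B := by
        apply Set.Subset.antisymm
        · intro K hK
          rcases hA'sub K hK with h | h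
          · rw [h]; exact Set.mem_insert _ _
          · exact Set.mem_insert_of_mem _ h
        · intro K hK
          rcases Set.mem_insert_iff.mp hK with rfl | h
          · have hPBu := bal_to_PB hb12.1
            have hPBv := bal_to_PB hb12.2
            have hPB' := PB_union_of_not_rel huv hr hPBu hPBv
            have hbal := bal_of_PB hPB'
            rw [hmerge] at hbal
            exact ⟨⟨u, hmerge.symm⟩, hbal⟩
          · exact hBsub h
      have hK1A : K1 ∈ A := ⟨⟨u, rfl⟩, hb12.1⟩
      have hK2A : K2 ∈ A := ⟨⟨v, rfl⟩, hb12.2⟩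
      have hBcard : B.ncard + 2 = A.ncard := by
        have h1 : B = (A \ {K1}) \ {K2} := by
          rw [hB]
          ext K
          simp only [Set.mem_diff, Set.mem_insert_iff, Set.mem_singleton_iff, not_or]
          tauto
        have hK2mem : K2 ∈ A \ {K1} := ⟨hK2A, by simpa using hK12.symm⟩
        have e1 := Set.ncard_diff_singleton_add_one hK2mem (Set.toFinite _)
        have e2 := Set.ncard_diff_singleton_add_one hK1A (Set.toFinite _)
        rw [h1]
        omega
      have hcard' : A'.ncard = B.ncard + 1 := by
        rw [hA'eq]
        exact Set.ncard_insert_of_notMem hK12B (Set.toFinite _)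
      constructor
      · intro _
        rw [hnum', hnum]
        omega
      · intro hnD
        exact absurd (Or.inr ⟨hr, Or.inl hb12.1⟩) hnD
    · have hA'eq : A' = B := by
        apply Set.Subset.antisymm
        · intro K hK
          rcases hA'sub K hK with rfl | h
          · exfalso
            have hbal := hK.2
            exact hb12 ⟨bal_anti Set.subset_union_left Set.subset_union_left hbal,
              bal_anti Set.subset_union_left Set.subset_union_right hbal⟩
          · exact h
        · exact hBsub
      by_cases hb1 : Bal G X K1
      · have hb2 : ¬ Bal G X K2 := fun h2 => hb12 ⟨hb1, h2⟩
        have hBeq : B = A \ {K1} := by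
          ext K
          simp only [hB, Set.mem_diff, Set.mem_insert_iff, Set.mem_singleton_iff, not_or]
          constructor
          · rintro ⟨h1, h2, h3⟩
            exact ⟨h1, h2⟩
          · rintro ⟨h1, h2⟩
            refine ⟨h1, h2, ?_⟩
            rintro rfl
            exact hb2 h1.2
        have hK1A : K1 ∈ A := ⟨⟨u, rfl⟩, hb1⟩
        have e2 := Set.ncard_diff_singleton_add_one hK1A (Set.toFinite _)
        constructor
        · intro _
          rw [hnum', hnum, hA'eq, hBeq]
          omega
        · intro hnD
          exact absurd (Or.inr ⟨hr, Or.inl hb1⟩) hnD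
      · by_cases hb2 : Bal G X K2
        · have hBeq : B = A \ {K2} := by
            ext K
            simp only [hB, Set.mem_diff, Set.mem_insert_iff, Set.mem_singleton_iff, not_or]
            constructor
            · rintro ⟨h1, h2, h3⟩
              exact ⟨h1, h3⟩
            · rintro ⟨h1, h2⟩
              refine ⟨h1, ?_, h2⟩
              rintro rfl
              exact hb1 h1.2
          have hK2A : K2 ∈ A := ⟨⟨v, rfl⟩, hb2⟩
          have e2 := Set.ncard_diff_singleton_add_one hK2A (Set.toFinite _)
          constructor
          · intro _
            rw [hnum', hnum, hA'eq, hBeq]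
            omega
          · intro hnD
            exact absurd (Or.inr ⟨hr, Or.inr hb2⟩) hnD
        · have hBeq : B = A := by
            ext K
            simp only [hB, Set.mem_diff, Set.mem_insert_iff, Set.mem_singleton_iff, not_or]
            constructor
            · rintro ⟨h1, -⟩
              exact h1
            · intro h1
              refine ⟨h1, ?_, ?_⟩
              · rintro rfl
                exact hb1 h1.2
              · rintro rfl
                exact hb2 h1.2
          constructor
          · intro hD
            exfalso
            rcases hD with ⟨hr', -⟩ | ⟨-, hor⟩
            · exact hr hr'
            · rcases hor with h | h
              · exact hb1 h
              · exact hb2 h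
          · intro _
            rw [hnum', hnum, hA'eq, hBeq]

lemma drops_mono [Fintype V] [Fintype E] {X Y : Set E} (hXY : X ⊆ Y) {e : E}
    (hD : drops G Y e) : drops G X e := by
  classical
  have huv : G.ends e = ((G.ends e).1, (G.ends e).2) := rfl
  set u := (G.ends e).1 with hu_def
  set v := (G.ends e).2 with hv_def
  by_cases hrX : rel G X u v
  · -- hard case: u ~X v, hence u ~Y v
    have hrY : rel G Y u v := rel_mono hXY hrX
    rcases hD with ⟨-, hbalY, hnbalY⟩ | ⟨hnr, -⟩
    swap
    · exact absurd hrY hnr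
    have hPBu : PB G Y u := bal_to_PB hbalY
    have hPBv : PB G Y v := PB_of_rel hrY hPBu
    have hnotPB : ¬ PB G (Y ∪ {e}) u := by
      intro hPB
      apply hnbalY
      have hbal := bal_of_PB hPB
      rwa [comp_union_of_rel huv hrY] at hbal
    have h2 : rel2 G (Y ∪ {e}) (u, true) (u, false) := not_not.mp hnotPB
    obtain ⟨a, b', hab', hrel⟩ := surgery huv hPBu hPBv h2
    obtain ⟨t, hlift⟩ := rel2_lift hrX true
    have hY1 : rel2 G Y (u, true) (v, t) := rel2_mono hXY hlift
    have hxt : t = !G.sign e := by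
      by_contra hne
      have ht' : t = G.sign e := by
        revert hne
        cases hs : G.sign e <;> cases t <;> simp [hs]
      cases a with
      | true =>
        have hteq : t = b' := PB_unique hPBu hY1 hrel
        apply hab'
        rw [← hteq, ht']
        cases G.sign e <;> rfl
      | false =>
        have hflip : rel2 G Y (u, true) (v, !b') := by
          simpa using rel2_flip hrel
        have hteq : t = !b' := PB_unique hPBu hY1 hflip
        apply hab'
        have hb' : b' = !t := by rw [hteq]; simp
        rw [hb', ht']
        cases G.sign e <;> rfl
    have hstep : R2 G (X ∪ {e}) (v, t) (u, false) := by
      refine ⟨e, Or.inr rfl, Or.inr huv, ?_⟩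
      simp only
      rw [hxt]
      cases G.sign e <;> rfl
    have hrel2' : rel2 G (X ∪ {e}) (u, true) (u, false) :=
      rel2_trans (rel2_mono Set.subset_union_left hlift) (Relation.EqvGen.rel _ _ hstep)
    have hbalX : Bal G X (G.comp X u) :=
      bal_anti hXY (comp_mono hXY u) hbalY
    refine Or.inl ⟨hrX, hbalX, ?_⟩
    intro hbal
    have hPB : PB G (X ∪ {e}) u := by
      apply bal_to_PB
      rwa [comp_union_of_rel huv hrX]
    exact hPB hrel2'
  · -- u and v in different components of X
    refine Or.inr ⟨hrX, ?_⟩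
    rcases hD with ⟨hrY, hbalY, -⟩ | ⟨-, hor⟩
    · exact Or.inl (bal_anti hXY (comp_mono hXY u) hbalY)
    · rcases hor with h | h
      · exact Or.inl (bal_anti hXY (comp_mono hXY u) h)
      · exact Or.inr (bal_anti hXY (comp_mono hXY v) h)

lemma numBal_super [Fintype V] [Fintype E] {X Y : Set E} (hXY : X ⊆ Y) (Z : Set E) :
    G.numBalancedComponents Y + G.numBalancedComponents (X ∪ Z) ≤
      G.numBalancedComponents X + G.numBalancedComponents (Y ∪ Z) := by
  classical
  have main : ∀ (Z : Set E), Z.Finite →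
      G.numBalancedComponents Y + G.numBalancedComponents (X ∪ Z) ≤
        G.numBalancedComponents X + G.numBalancedComponents (Y ∪ Z) := by
    intro Z hZ
    refine Set.Finite.induction_on (motive := fun Z _ => G.numBalancedComponents Y + G.numBalancedComponents (X ∪ Z) ≤
          G.numBalancedComponents X + G.numBalancedComponents (Y ∪ Z)) Z hZ (by rw [Set.union_empty, Set.union_empty]; omega) ?_
    intro e Z₀ he hfin ihZ
    have hXe : X ∪ insert e Z₀ = (X ∪ Z₀) ∪ {e} := by
      rw [Set.union_singleton, Set.union_insert]
    have hYe : Y ∪ insert e Z₀ = (Y ∪ Z₀) ∪ {e} := by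
      rw [Set.union_singleton, Set.union_insert]
    rw [hXe, hYe]
    have hsub : X ∪ Z₀ ⊆ Y ∪ Z₀ := Set.union_subset_union_left _ hXY
    have hdX := delta (G := G) (X ∪ Z₀) e
    have hdY := delta (G := G) (Y ∪ Z₀) e
    by_cases hD : drops G (Y ∪ Z₀) e
    · have hDX := drops_mono hsub hD
      have h1 := hdX.1 hDX
      have h2 := hdY.1 hD
      omega
    · have h2 := hdY.2 hD
      by_cases hDX : drops G (X ∪ Z₀) e
      · have h1 := hdX.1 hDX
        omega
      · have h1 := hdX.2 hDX
        omega
  exact main Z (Set.toFinite Z)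

lemma comp_empty (v : V) : G.comp (∅ : Set E) v = {v} := by
  ext w
  simp only [Set.mem_singleton_iff, mem_comp]
  constructor
  · intro h
    induction h with
    | rel x y hxy =>
      obtain ⟨e, he, -⟩ := hxy
      exact absurd he (Set.notMem_empty e)
    | refl x => rfl
    | symm x y _ ih => exact ih.symm
    | trans x y z _ _ ih1 ih2 => exact ih2.trans ih1
  · rintro rfl
    exact rel_refl _

lemma numBal_empty [Fintype V] [Fintype E] :
    G.numBalancedComponents (∅ : Set E) = Fintype.card V := by
  have hset : {K | G.BalancedComponent (∅ : Set E) K} =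
      Set.range (fun v : V => ({v} : Set V)) := by
    ext K
    constructor
    · rintro ⟨⟨v, rfl⟩, -⟩
      exact ⟨v, (comp_empty v).symm⟩
    · rintro ⟨v, rfl⟩
      refine ⟨⟨v, (comp_empty v).symm⟩, ?_⟩
      intro C hC hverts hcyc
      obtain ⟨f, hf⟩ := hcyc.1
      exact absurd (hC hf) (Set.notMem_empty f)
  have hcard := Nat.card_range_of_injective
    (f := fun v : V => ({v} : Set V)) (fun a b h => Set.singleton_eq_singleton_iff.mp h)
  rw [SignedGraph.numBalancedComponents, hset, ← Nat.card_coe_set_eq, hcard,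
    Nat.card_eq_fintype_card]

end Aux

theorem stmt6 {V E : Type*} [Fintype V] [Fintype E] (G : SignedGraph V E) :
    (Fintype.card V - G.numBalancedComponents (∅ : Set E) = 0) ∧
    (∀ (X : Set E) (e : E),
        Fintype.card V - G.numBalancedComponents X ≤
          Fintype.card V - G.numBalancedComponents (X ∪ {e}) ∧
        Fintype.card V - G.numBalancedComponents (X ∪ {e}) ≤
          (Fintype.card V - G.numBalancedComponents X) + 1) ∧
    (∀ X Y : Set E,
        (Fintype.card V - G.numBalancedComponents (X ∪ Y)) +
            (Fintype.card V - G.numBalancedComponents (X ∩ Y)) ≤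
          (Fintype.card V - G.numBalancedComponents X) +
            (Fintype.card V - G.numBalancedComponents Y)) := by
  classical
  refine ⟨?_, ?_, ?_⟩
  · rw [Aux.numBal_empty]
    omega
  · intro X e
    have hle := Aux.numBal_le (G := G) X
    have hle' := Aux.numBal_le (G := G) (X ∪ {e})
    have hd := Aux.delta (G := G) X e
    by_cases hD : Aux.drops G X e
    · have h1 := hd.1 hD
      constructor <;> omega
    · have h1 := hd.2 hD
      constructor <;> omega
  · intro X Y
    have hsuper := Aux.numBal_super (G := G)
      (Set.inter_subset_right : X ∩ Y ⊆ Y) (X \ Y)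
    have h1 : (X ∩ Y) ∪ (X \ Y) = X := Set.inter_union_diff X Y
    have h2 : Y ∪ (X \ Y) = X ∪ Y := by
      rw [Set.union_diff_self]
      exact Set.union_comm Y X
    rw [h1, h2] at hsuper
    have b1 := Aux.numBal_le (G := G) X
    have b2 := Aux.numBal_le (G := G) Y
    have b3 := Aux.numBal_le (G := G) (X ∪ Y)
    have b4 := Aux.numBal_le (G := G) (X ∩ Y)
    omega
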